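/- Let S be a set and e : S ≃ S a bijection with the orbit {eⁿ(s) : n ∈ ℤ} of every s ∈ S infinite, and let T = FreeGroup.freeGroupCongr e be the induced automorphism of Γ = FreeGroup S. Let k ≥ 1 and let F₁, …, F_k be finite subsets of Γ. Then there exists N ∈ ℕ such that for every n : {1,…,k} → ℤ with |n(i) − n(j)| ≥ N for all i ≠ j, and for all g₁ ∈ F₁, …, g_k ∈ F_k, one has T^{n(1)}(g₁) · T^{n(2)}(g₂) ⋯ T^{n(k)}(g_k) = 1 if and only if g₁ = g₂ = ⋯ = g_k = 1. -/

import Mathlib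

section Aux

variable {α : Type*} [DecidableEq α]

/-- The no-cancellation relation on letters of a free group word. -/
def FG.R (p q : α × Bool) : Prop := ¬(p.1 = q.1 ∧ p.2 = !q.2)

lemma FG.reduce_of_chain' : ∀ {L : List (α × Bool)}, List.Chain' FG.R L → FreeGroup.reduce L = L
  | [], _ => rfl
  | x :: M, h => by
    have hM : FreeGroup.reduce M = M := FG.reduce_of_chain' h.tail
    rw [FreeGroup.reduce.cons, hM]
    cases M with
    | nil => rfl
    | cons hd tl =>
      have hr : FG.R x hd := (List.isChain_cons_cons.1 h).1
      simp only [FG.R] at hr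
      dsimp only
      rw [if_neg hr]

lemma FG.chain'_of_reduce : ∀ {L : List (α × Bool)}, FreeGroup.reduce L = L → List.Chain' FG.R L
  | [], _ => List.isChain_nil
  | x :: M, h => by
    rw [FreeGroup.reduce.cons] at h
    cases r : FreeGroup.reduce M with
    | nil =>
      rw [r] at h
      simp only at h
      rw [← h]
      exact List.isChain_singleton x
    | cons hd tl =>
      rw [r] at h
      simp only at h
      by_cases hc : x.1 = hd.1 ∧ x.2 = !hd.2
      · rw [if_pos hc] at h
        exfalso
        have hlen : (FreeGroup.reduce M).length ≤ M.length :=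
          (FreeGroup.Red.sublist FreeGroup.reduce.red).length_le
        rw [r] at hlen
        have h2 := congrArg List.length h
        simp only [List.length_cons] at h2 hlen
        omega
      · rw [if_neg hc] at h
        have hM : M = hd :: tl := by
          have := congrArg List.tail h
          simpa using this.symm
        have hredM : FreeGroup.reduce M = M := by rw [r, hM]
        have ih := FG.chain'_of_reduce hredM
        rw [hM]
        rw [hM] at ih
        exact List.isChain_cons_cons.2 ⟨hc, ih⟩

omit [DecidableEq α] in
lemma FG.chain'_join : ∀ ls : List (List (α × Bool)), (∀ L ∈ ls, List.Chain' FG.R L) →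
    List.Pairwise (fun L M => ∀ p ∈ L, ∀ q ∈ M, p.1 ≠ q.1) ls →
    List.Chain' FG.R ls.flatten
  | [], _, _ => List.isChain_nil
  | L :: ls, hall, hpw => by
    rw [List.flatten_cons]
    refine List.isChain_append.2 ⟨hall L (by simp),
      FG.chain'_join ls (fun M hM => hall M (by simp [hM])) hpw.tail, ?_⟩
    intro x hx y hy
    have hxL : x ∈ L := List.mem_of_mem_getLast? hx
    have hyJ : y ∈ ls.flatten := List.mem_of_mem_head? hy
    obtain ⟨M, hM, hyM⟩ := List.mem_flatten.1 hyJ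
    have := (List.pairwise_cons.1 hpw).1 M hM x hxL y hyM
    exact fun hc => this hc.1

omit [DecidableEq α] in
lemma FG.prod_map_mk : ∀ ls : List (List (α × Bool)),
    (ls.map FreeGroup.mk).prod = FreeGroup.mk ls.flatten
  | [] => by simp; rfl
  | L :: ls => by
    rw [List.map_cons, List.prod_cons, FG.prod_map_mk ls, List.flatten_cons, FreeGroup.mul_mk]

variable {S : Type*}

lemma FG.orbit_inj (e : Equiv.Perm S) (s : S)
    (hs : (Set.range fun n : ℤ => (e ^ n) s).Infinite) :
    Function.Injective (fun n : ℤ => (e ^ n) s) := by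
  intro a b hab
  by_contra hne
  set d : ℤ := b - a with hd
  have hd0 : d ≠ 0 := sub_ne_zero.2 (fun h => hne h.symm)
  have hfix : (e ^ d) s = s := by
    have : (e ^ (-a) * e ^ b) s = (e ^ (-a) * e ^ a) s := by
      simp only [Equiv.Perm.mul_apply]
      simp only at hab
      rw [← hab]
    rwa [← zpow_add, ← zpow_add, neg_add_cancel, zpow_zero, neg_add_eq_sub, ← hd,
      Equiv.Perm.coe_one, id_eq] at this
  have hfixall : ∀ q : ℤ, ((e ^ d) ^ q) s = s :=
    fun q => Equiv.Perm.zpow_apply_eq_self_of_apply_eq_self hfix q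
  have hfin : (Set.range fun n : ℤ => (e ^ n) s).Finite := by
    have habs : 0 < |d| := abs_pos.2 hd0
    have hsub : (Set.range fun n : ℤ => (e ^ n) s) ⊆
        (fun r : ℤ => (e ^ r) s) '' (Set.Ico 0 |d|) := by
      rintro x ⟨n, rfl⟩
      refine ⟨n % |d|, ⟨Int.emod_nonneg n (abs_ne_zero.2 hd0), Int.emod_lt_of_pos n habs⟩, ?_⟩
      have hfd : (e ^ |d|) s = s := by
        rcases abs_choice d with h | h
        · rw [h]; exact hfix
        · rw [h]
          have := hfixall (-1)
          rwa [← zpow_mul, mul_neg_one] at this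
      have hfdall : ∀ q : ℤ, ((e ^ |d|) ^ q) s = s :=
        fun q => Equiv.Perm.zpow_apply_eq_self_of_apply_eq_self hfd q
      have : (e ^ n) s = (e ^ (n % |d| + |d| * (n / |d|))) s := by
        rw [Int.emod_add_mul_ediv n |d|]
      simp only
      rw [this, zpow_add, Equiv.Perm.mul_apply, zpow_mul, hfdall]
    exact Set.Finite.subset ((Set.finite_Ico _ _).image _) hsub
  exact hs hfin

/-- `freeGroupCongr` as a monoid hom from permutations to automorphisms. -/
def FGphi (S : Type*) : Equiv.Perm S →* MulAut (FreeGroup S) :=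
  MonoidHom.mk' (fun u => FreeGroup.freeGroupCongr u) (by
    intro u v
    ext x
    show FreeGroup.freeGroupCongr (v.trans u) x =
      (FreeGroup.freeGroupCongr v).trans (FreeGroup.freeGroupCongr u) x
    rw [FreeGroup.freeGroupCongr_trans])

lemma FGpow (e : Equiv.Perm S) (m : ℤ) :
    (FreeGroup.freeGroupCongr e ^ m : FreeGroup S ≃* FreeGroup S) =
      FreeGroup.freeGroupCongr (e ^ m) :=
  (map_zpow (FGphi S) e m).symm

end Aux

/-- group-theoretic content of the k-mixing consequence of
Theorem 4.1. Let `e : S ≃ S` have all orbits infinite, `T = FreeGroup.freeGroupCongr e`,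
and let `F 0, …, F (k-1)` be finite subsets of `FreeGroup S`. Then there is `N` such that
whenever `|n i − n j| ≥ N` for all `i ≠ j` and `g i ∈ F i` for all `i`, one has
`T^{n 0}(g 0) ⋯ T^{n (k-1)}(g (k-1)) = 1` iff all `g i = 1`. -/
theorem free_joinings_stmt8
    {S : Type*} (e : S ≃ S)
    (horb : ∀ s : S, (Set.range fun n : ℤ => (e ^ n) s).Infinite)
    (k : ℕ) (hk : 1 ≤ k) (F : Fin k → Finset (FreeGroup S)) :
    ∃ N : ℕ, ∀ n : Fin k → ℤ, (∀ i j, i ≠ j → (N : ℤ) ≤ |n i - n j|) →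
      ∀ g : Fin k → FreeGroup S, (∀ i, g i ∈ F i) →
        ((List.ofFn fun i =>
          ((FreeGroup.freeGroupCongr e ^ n i :
            FreeGroup S ≃* FreeGroup S) (g i))).prod = 1 ↔ ∀ i, g i = 1) := by
  classical
  -- the finite set of generators appearing in any element of any `F i`
  set A : Finset S := Finset.univ.biUnion (fun i : Fin k =>
    (F i).biUnion (fun g => (g.toWord.map Prod.fst).toFinset)) with hA
  have hmemA : ∀ i, ∀ g ∈ F i, ∀ p ∈ g.toWord, p.1 ∈ A := by
    intro i g hg p hp
    simp only [hA, Finset.mem_biUnion, Finset.mem_univ, true_and, List.mem_toFinset,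
      List.mem_map]
    exact ⟨i, g, hg, p, hp, rfl⟩
  -- the set of "bad" shifts is finite
  have hBfin : {m : ℤ | ∃ s ∈ (A : Set S), ∃ t ∈ (A : Set S), (e ^ m) s = t}.Finite := by
    have heq : {m : ℤ | ∃ s ∈ (A : Set S), ∃ t ∈ (A : Set S), (e ^ m) s = t} =
        ⋃ s ∈ (A : Set S), ⋃ t ∈ (A : Set S), {m : ℤ | (e ^ m) s = t} := by
      ext m; simp
    rw [heq]
    refine Set.Finite.biUnion A.finite_toSet (fun s _ =>
      Set.Finite.biUnion A.finite_toSet (fun t _ => ?_))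
    apply Set.Subsingleton.finite
    intro m hm m' hm'
    exact FG.orbit_inj e s (horb s) (hm.trans hm'.symm)
  refine ⟨hBfin.toFinset.sup (fun m => m.natAbs) + 1, ?_⟩
  intro n hn g hg
  -- key disjointness
  have hdisj : ∀ i j : Fin k, i ≠ j → ∀ a ∈ A, ∀ b ∈ A, (e ^ n i) a ≠ (e ^ n j) b := by
    intro i j hij a ha b hb hcontra
    have hm : (e ^ (n i - n j)) a = b := by
      have : (e ^ (-n j) * e ^ n i) a = (e ^ (-n j) * e ^ n j) b := by
        simp only [Equiv.Perm.mul_apply, hcontra]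
      rwa [← zpow_add, ← zpow_add, neg_add_cancel, zpow_zero, neg_add_eq_sub,
        Equiv.Perm.coe_one, id_eq] at this
    have hmem : (n i - n j) ∈ hBfin.toFinset := by
      rw [Set.Finite.mem_toFinset]
      exact ⟨a, ha, b, hb, hm⟩
    have hle : (n i - n j).natAbs ≤ hBfin.toFinset.sup (fun m => m.natAbs) :=
      Finset.le_sup (f := fun m => m.natAbs) hmem
    have hge := hn i j hij
    rw [Int.abs_eq_natAbs] at hge
    omega
  -- the shifted words
  set L : Fin k → List (S × Bool) :=
    (fun i => (g i).toWord.map (fun p => ((e ^ n i) p.1, p.2))) with hLdef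
  have hL : ∀ i, (FreeGroup.freeGroupCongr e ^ n i :
      FreeGroup S ≃* FreeGroup S) (g i) = FreeGroup.mk (L i) := by
    intro i
    conv_lhs => rw [← FreeGroup.mk_toWord (x := g i)]
    rw [FGpow]
    exact FreeGroup.map.mk
  have hprod : (List.ofFn fun i => (FreeGroup.freeGroupCongr e ^ n i :
      FreeGroup S ≃* FreeGroup S) (g i)).prod = FreeGroup.mk ((List.ofFn L).flatten) := by
    have hfun : (fun i => (FreeGroup.freeGroupCongr e ^ n i :
        FreeGroup S ≃* FreeGroup S) (g i)) = FreeGroup.mk ∘ L := funext hL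
    rw [hfun, ← List.map_ofFn, FG.prod_map_mk]
  -- the concatenation is reduced
  have hchain : List.Chain' FG.R ((List.ofFn L).flatten) := by
    refine FG.chain'_join _ ?_ ?_
    · intro M hM
      obtain ⟨i, rfl⟩ := List.mem_ofFn.1 hM
      have hred : List.Chain' FG.R (g i).toWord :=
        FG.chain'_of_reduce (FreeGroup.reduce_toWord _)
      refine (List.isChain_map _).2 (hred.imp ?_)
      intro p q hpq hc
      exact hpq ⟨(e ^ n i).injective hc.1, hc.2⟩
    · rw [List.pairwise_ofFn]
      intro i j hij p hp q hq
      obtain ⟨p', hp', rfl⟩ := List.mem_map.1 hp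
      obtain ⟨q', hq', rfl⟩ := List.mem_map.1 hq
      exact hdisj i j (Fin.ne_of_lt hij) p'.1 (hmemA i (g i) (hg i) p' hp')
        q'.1 (hmemA j (g j) (hg j) q' hq')
  have hredJ : (FreeGroup.mk ((List.ofFn L).flatten)).toWord = (List.ofFn L).flatten := by
    rw [FreeGroup.toWord_mk, FG.reduce_of_chain' hchain]
  rw [hprod]
  constructor
  · intro h i
    have hnil : (List.ofFn L).flatten = [] := by
      rw [← hredJ, h, FreeGroup.toWord_one]
    have hLi : L i = [] :=
      List.flatten_eq_nil_iff.1 hnil (L i) (List.mem_ofFn.2 ⟨i, rfl⟩)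
    rw [hLdef] at hLi
    simp only [List.map_eq_nil_iff] at hLi
    exact FreeGroup.toWord_eq_nil_iff.1 hLi
  · intro h
    have : ∀ i, L i = [] := by
      intro i
      rw [hLdef]
      simp [h i, FreeGroup.toWord_one]
    have hnil : (List.ofFn L).flatten = [] := by
      rw [List.flatten_eq_nil_iff]
      intro M hM
      obtain ⟨i, rfl⟩ := List.mem_ofFn.1 hM
      exact this i
    rw [hnil, ← FreeGroup.one_eq_mk]
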